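/- Under Assumption 1, if α < 1/(βM), then for all θ, θ' ∈ Θ the proposal probability admits the lower bound Q_{α,β}(θ'|θ) ≥ exp(β⟨∇U(θ), θ'−θ⟩ − ‖θ−θ'‖²/(2α)) / Σ_{x∈Θ} exp(β(U(x) − U(θ))). -/

import Mathlib

open scoped RealInnerProductSpace BigOperators
open Classical

lemma descent_lemma {d : ℕ}
    (U : EuclideanSpace ℝ (Fin d) → ℝ)
    (g : EuclideanSpace ℝ (Fin d) → EuclideanSpace ℝ (Fin d))
    (hgrad : ∀ x, HasGradientAt U (g x) x)
    (M : ℝ) (hM : 0 ≤ M)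
    (hLip : ∀ x y, ‖g x - g y‖ ≤ M * ‖x - y‖)
    (θ x : EuclideanSpace ℝ (Fin d)) :
    U θ + ⟪g θ, x - θ⟫ - M / 2 * ‖x - θ‖ ^ 2 ≤ U x := by
  set v := x - θ with hv
  have hgcont : Continuous g := by
    have : LipschitzWith ⟨M, hM⟩ g := by
      apply LipschitzWith.of_dist_le_mul
      intro a b
      rw [dist_eq_norm, dist_eq_norm]
      exact hLip a b
    exact this.continuous
  have hline : ∀ t : ℝ, HasDerivAt (fun t : ℝ => θ + t • v) v t := by
    intro t
    simpa using ((hasDerivAt_id t).smul_const v).const_add θ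
  have hderiv : ∀ t : ℝ,
      HasDerivAt (fun t : ℝ => U (θ + t • v)) (⟪g (θ + t • v), v⟫) t := by
    intro t
    have h1 := ((hgrad (θ + t • v)).hasFDerivAt).comp_hasDerivAt t (hline t)
    exact h1.congr_deriv (by simp)
  have hcont : Continuous fun t : ℝ => ⟪g (θ + t • v), v⟫ :=
    ((hgcont.comp (continuous_const.add (continuous_id.smul continuous_const)))).inner continuous_const
  have hFTC : U x - U θ = ∫ t in (0:ℝ)..1, ⟪g (θ + t • v), v⟫ := by
    have := intervalIntegral.integral_eq_sub_of_hasDerivAt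
      (f := fun t : ℝ => U (θ + t • v)) (f' := fun t => ⟪g (θ + t • v), v⟫)
      (a := 0) (b := 1)
      (fun t _ => hderiv t) (hcont.intervalIntegrable 0 1)
    simp only [one_smul, zero_smul, add_zero] at this
    rw [this]
    have hx : θ + v = x := by simp [hv]
    rw [hx]
  have hlb : ∀ t ∈ Set.Icc (0:ℝ) 1,
      ⟪g θ, v⟫ - M * ‖v‖ ^ 2 * t ≤ ⟪g (θ + t • v), v⟫ := by
    intro t ht
    have h1 : ⟪g θ, v⟫ - ⟪g (θ + t • v), v⟫ = ⟪g θ - g (θ + t • v), v⟫ := by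
      rw [inner_sub_left]
    have h2 : ⟪g θ - g (θ + t • v), v⟫ ≤ ‖g θ - g (θ + t • v)‖ * ‖v‖ :=
      real_inner_le_norm _ _
    have h3 : ‖g θ - g (θ + t • v)‖ ≤ M * (t * ‖v‖) := by
      have := hLip θ (θ + t • v)
      simpa [norm_smul, abs_of_nonneg ht.1] using this
    nlinarith [norm_nonneg v, mul_nonneg hM (mul_nonneg ht.1 (norm_nonneg v))]
  have hint : (⟪g θ, v⟫ - M / 2 * ‖v‖ ^ 2) ≤ ∫ t in (0:ℝ)..1, ⟪g (θ + t • v), v⟫ := by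
    have hI : (∫ t in (0:ℝ)..1, (⟪g θ, v⟫ - M * ‖v‖ ^ 2 * t)) =
        ⟪g θ, v⟫ - M / 2 * ‖v‖ ^ 2 := by
      rw [intervalIntegral.integral_sub intervalIntegrable_const
          ((by fun_prop : Continuous fun t : ℝ => M * ‖v‖ ^ 2 * t).intervalIntegrable 0 1)]
      rw [intervalIntegral.integral_const_mul, integral_id]
      simp
      ring
    rw [← hI]
    apply intervalIntegral.integral_mono_on zero_le_one
      ((continuous_const.sub (continuous_const.mul continuous_id)).intervalIntegrable 0 1)
      (hcont.intervalIntegrable 0 1) hlb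
  linarith [hFTC ▸ hint]


/-- under Assumption 1, if α < 1/(βM), then for all θ, θ' ∈ Θ the proposal
probability satisfies
Q_{α,β}(θ'|θ) ≥ exp(β⟨∇U(θ), θ'−θ⟩ − ‖θ−θ'‖²/(2α)) / Σ_{x∈Θ} exp(β(U(x) − U(θ))). -/
theorem proposal_lower_bound
    {d : ℕ} (hd : 1 ≤ d)
    (Θ : Finset (EuclideanSpace ℝ (Fin d))) (hΘ : Θ.Nonempty)
    (U : EuclideanSpace ℝ (Fin d) → ℝ) (hU : ContDiff ℝ 2 U)
    (gradU : EuclideanSpace ℝ (Fin d) → EuclideanSpace ℝ (Fin d))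
    (hgrad : ∀ x, HasGradientAt U (gradU x) x)
    -- Assumption 1: ∇U is M-Lipschitz
    (M : ℝ) (hM : 0 < M)
    (hLip : ∀ x y, ‖gradU x - gradU y‖ ≤ M * ‖x - y‖)
    -- step size and balancing parameter
    (α β : ℝ) (hα : 0 < α) (hβ0 : 0 < β) (hβ1 : β ≤ 1)
    (hαβM : α < 1 / (β * M))
    -- the proposal normalizing constant Z_{α,β}
    (Zc : EuclideanSpace ℝ (Fin d) → ℝ)
    (hZc : ∀ θ, Zc θ =
      ∑ x ∈ Θ, Real.exp (β * ⟪gradU θ, x - θ⟫ - ‖x - θ‖ ^ 2 / (2 * α)))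
    -- the proposal Q_{α,β}
    (Q : EuclideanSpace ℝ (Fin d) → EuclideanSpace ℝ (Fin d) → ℝ)
    (hQ : ∀ θ θ', Q θ θ' =
      Real.exp (β * ⟪gradU θ, θ' - θ⟫ - ‖θ' - θ‖ ^ 2 / (2 * α)) / Zc θ)
 :
    ∀ θ ∈ Θ, ∀ θ' ∈ Θ,
      Real.exp (β * ⟪gradU θ, θ' - θ⟫ - ‖θ - θ'‖ ^ 2 / (2 * α))
          / ∑ x ∈ Θ, Real.exp (β * (U x - U θ))
        ≤ Q θ θ' := by
  intro θ hθ θ' hθ'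
  have hd2 : α * (β * M) < 1 := (lt_div_iff₀ (mul_pos hβ0 hM)).1 hαβM
  have key : ∀ x ∈ Θ,
      Real.exp (β * ⟪gradU θ, x - θ⟫ - ‖x - θ‖ ^ 2 / (2 * α)) ≤
      Real.exp (β * (U x - U θ)) := by
    intro x _
    apply Real.exp_le_exp.2
    have hdesc := descent_lemma U gradU hgrad M hM.le hLip θ x
    have h3 : β * ⟪gradU θ, x - θ⟫ - β * M / 2 * ‖x - θ‖ ^ 2 ≤ β * (U x - U θ) := by
      nlinarith [mul_le_mul_of_nonneg_left
        (by linarith : ⟪gradU θ, x - θ⟫ - M / 2 * ‖x - θ‖ ^ 2 ≤ U x - U θ) hβ0.le]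
    have h2 : β * M * ‖x - θ‖ ^ 2 ≤ ‖x - θ‖ ^ 2 / α := by
      rw [le_div_iff₀ hα]
      nlinarith [sq_nonneg ‖x - θ‖]
    have h4 : ‖x - θ‖ ^ 2 / (2 * α) = (‖x - θ‖ ^ 2 / α) / 2 := by ring
    linarith
  have hZpos : 0 < Zc θ := by
    rw [hZc]
    exact Finset.sum_pos (fun x _ => Real.exp_pos _) hΘ
  have hZle : Zc θ ≤ ∑ x ∈ Θ, Real.exp (β * (U x - U θ)) := by
    rw [hZc]
    exact Finset.sum_le_sum key
  rw [hQ, norm_sub_rev θ' θ]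
  exact div_le_div_of_nonneg_left (Real.exp_pos _).le hZpos hZle
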